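/- arXiv:1811.00824 — 3 statements merged into one kernel-verified Lean document; each statement's English description precedes it below -/
import Mathlib

section
/- In the master-problem reduction, if a feasible solution achieves value ≥ 1, then there is an optimal solution in which every cost vector c^i is a 0-1 vector: for each scenario i with assigned solutions x^{i_1},...,x^{i_p}, either there exists a coordinate s with x^{i_j}_s = 1 for all j (in which case c^i can be taken as the indicator vector of s), or two assigned solutions have disjoint supports, which contradicts sum_k c^i_k = 1 and all assigned values being ≥ 1. -/
/-- If `x^1,…,x^p ∈ {0,1}^n` and `c` in the simplex satisfy `c·x^j ≥ 1` for all `j`, then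
there is a coordinate `s` with `x^j_s = 1` for all `j`, and the indicator vector of `s`
also achieves value at least 1 on every `x^j`. -/
theorem stmt_10 (n p : ℕ) (x : Fin p → Fin n → ℝ) (hx : ∀ j k, x j k = 0 ∨ x j k = 1)
    (c : Fin n → ℝ) (hc : ∀ k, 0 ≤ c k ∧ c k ≤ 1) (hcs : (∑ k, c k) = 1)
    (h : ∀ j, 1 ≤ ∑ k, c k * x j k) :
    ∃ s : Fin n, (∀ j, x j s = 1) ∧
      ∀ j, 1 ≤ ∑ k, (if k = s then (1 : ℝ) else 0) * x j k := by
  -- find s with c s > 0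
  have hex : ∃ s, 0 < c s := by
    by_contra hno
    push_neg at hno
    have : (∑ k, c k) ≤ 0 := Finset.sum_nonpos (fun k _ => hno k)
    linarith
  obtain ⟨s, hs⟩ := hex
  have key : ∀ j, x j s = 1 := by
    intro j
    by_contra hne
    have hx0 : x j s = 0 := (hx j s).resolve_right hne
    have hle : ∀ k ∈ Finset.univ, c k * x j k ≤ c k := by
      intro k _
      rcases hx j k with h0 | h1
      · rw [h0]; simpa using (hc k).1
      · rw [h1]; simp
    have hsum : (∑ k, c k * x j k) ≤ ∑ k, c k := Finset.sum_le_sum hle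
    have heq : (∑ k, c k * x j k) = ∑ k, c k := le_antisymm hsum (hcs ▸ h j)
    have hall := (Finset.sum_eq_sum_iff_of_le hle).mp heq
    have := hall s (Finset.mem_univ s)
    rw [hx0, mul_zero] at this
    linarith
  refine ⟨s, key, fun j => ?_⟩
  have : (∑ k, (if k = s then (1:ℝ) else 0) * x j k) = x j s := by
    rw [Finset.sum_eq_single s]
    · simp
    · intro k _ hk; simp [hk]
    · simp
  rw [this, key j]
end

section
/- The midpoint solution gives an N-approximation for the min-max robust problem: if x̂ minimizes (1/N)(sum_{i∈[N]} c^i)·x over x ∈ X, with all c^i ∈ R^n_{≥0}, then max_{j∈[N]} c^j·x̂ ≤ N · min_{x∈X} max_{j∈[N]} c^j·x. -/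
/-- The midpoint solution is an `N`-approximation: if `x̂` minimizes the midpoint cost
`(1/N)(∑_i c^i)·x` over `x ∈ X ⊆ {0,1}^n` with nonnegative scenarios, then
`max_j c^j·x̂ ≤ N · min_{x∈X} max_j c^j·x`. -/
theorem stmt_17 (n N : ℕ) (hN : 0 < N) (X : Finset (Fin n → ℝ)) (hX : X.Nonempty)
    (hX01 : ∀ x ∈ X, ∀ k, x k = 0 ∨ x k = 1)
    (c : Fin N → Fin n → ℝ) (hc : ∀ i k, 0 ≤ c i k)
    (xhat : Fin n → ℝ) (hxhat : xhat ∈ X)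
    (hmid : ∀ x ∈ X,
      (1 / (N : ℝ)) * (∑ k, (∑ i, c i k) * xhat k) ≤
      (1 / (N : ℝ)) * (∑ k, (∑ i, c i k) * x k)) :
    (Finset.univ.sup' (Finset.univ_nonempty_iff.mpr ⟨⟨0, hN⟩⟩)
        fun j => ∑ k, c j k * xhat k) ≤
    (N : ℝ) * X.inf' hX (fun x =>
      Finset.univ.sup' (Finset.univ_nonempty_iff.mpr ⟨⟨0, hN⟩⟩)
        fun j => ∑ k, c j k * x k) := by
  have hne : (Finset.univ : Finset (Fin N)).Nonempty :=
    Finset.univ_nonempty_iff.mpr ⟨⟨0, hN⟩⟩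
  have hNpos : (0:ℝ) < N := by exact_mod_cast hN
  have hxnn : ∀ x ∈ X, ∀ k, 0 ≤ x k := by
    intro x hx k
    rcases hX01 x hx k with h | h <;> simp [h]
  obtain ⟨x0, hx0, hx0eq⟩ := Finset.exists_mem_eq_inf' hX
    (fun x => Finset.univ.sup' hne fun j => ∑ k, c j k * x k)
  rw [hx0eq, Finset.sup'_le_iff]
  intro j _
  have h1 : (∑ k, c j k * xhat k) ≤ ∑ k, (∑ i, c i k) * xhat k :=
    Finset.sum_le_sum fun k _ => mul_le_mul_of_nonneg_right
      (Finset.single_le_sum (fun i _ => hc i k) (Finset.mem_univ j))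
      (hxnn xhat hxhat k)
  have h2 : (∑ k, (∑ i, c i k) * xhat k) ≤ ∑ k, (∑ i, c i k) * x0 k := by
    have := mul_le_mul_of_nonneg_left (hmid x0 hx0) (le_of_lt hNpos)
    field_simp at this
    linarith
  have h3 : (∑ k, (∑ i, c i k) * x0 k) ≤
      (N:ℝ) * (Finset.univ.sup' hne fun j => ∑ k, c j k * x0 k) := by
    have : (∑ k, (∑ i, c i k) * x0 k) = ∑ i : Fin N, ∑ k, c i k * x0 k := by
      rw [Finset.sum_comm]
      simp [Finset.sum_mul]
    rw [this]
    calc ∑ i : Fin N, ∑ k, c i k * x0 k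
        ≤ ∑ _i : Fin N, (Finset.univ.sup' hne fun j => ∑ k, c j k * x0 k) :=
          Finset.sum_le_sum fun i _ => Finset.le_sup' (fun j => ∑ k, c j k * x0 k) (Finset.mem_univ i)
      _ = (N:ℝ) * (Finset.univ.sup' hne fun j => ∑ k, c j k * x0 k) := by
          simp [mul_comm]
  linarith
end

section
/- In the Σ^p_2-hardness construction, for fixed signs a^i_j ∈ {−1,0,1} (for i ∈ [N], j ∈ [s]) and b^i_j ∈ {−1,0,1} (for i ∈ [N], j ∈ [t]) with exactly three nonzero signs per clause i, and fixed d ∈ {−1,1}^s, the robust value min over (y^1,y^2) ∈ {0,1}^t × {0,1}^t with y^1_j + y^2_j = 1 of max_{i∈[N]} [ sum_j a^i_j d_j + sum_j b^i_j (y^1_j − y^2_j) ] is at most 3, and it equals 3 if and only if for every β ∈ {0,1}^t there exists a clause i such that all three literals of clause i are satisfied by the assignment (α, β) where α_j = (d_j = 1) and β_j corresponds to y^1_j = 1. -/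
lemma stmt18_aux_le (x e : ℝ) (hx : x = -1 ∨ x = 0 ∨ x = 1) (he : e = 1 ∨ e = -1) :
    x * e ≤ if x ≠ 0 then 1 else 0 := by
  rcases hx with h | h | h <;> rcases he with h' | h' <;> subst_vars <;> norm_num

lemma stmt18_aux_ge (x e : ℝ) (hx : x = -1 ∨ x = 0 ∨ x = 1) (he : e = 1 ∨ e = -1) :
    -(if x ≠ 0 then 1 else 0) ≤ x * e := by
  rcases hx with h | h | h <;> rcases he with h' | h' <;> subst_vars <;> norm_num

/-- In the Σ^p_2-hardness construction: for clause signs `a^i ∈ {-1,0,1}^s`,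
`b^i ∈ {-1,0,1}^t` with exactly three nonzero signs per clause, and `d ∈ {-1,1}^s`, the
value `min_{y ∈ {0,1}^t} max_i [∑_j a^i_j d_j + ∑_j b^i_j (2 y_j - 1)]` is at most 3, with
equality iff for every 0-1 vector `y` some clause `i` is fully satisfied, i.e. achieves
value exactly 3. -/
theorem stmt_18 (s t N : ℕ) (hN : 0 < N)
    (a : Fin N → Fin s → ℝ) (b : Fin N → Fin t → ℝ)
    (ha : ∀ i j, a i j = -1 ∨ a i j = 0 ∨ a i j = 1)
    (hb : ∀ i j, b i j = -1 ∨ b i j = 0 ∨ b i j = 1)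
    (h3 : ∀ i, (Finset.univ.filter fun j => a i j ≠ 0).card +
      (Finset.univ.filter fun j => b i j ≠ 0).card = 3)
    (d : Fin s → ℝ) (hd : ∀ j, d j = 1 ∨ d j = -1)
    (V : (Fin t → ℝ) → Fin N → ℝ)
    (hV : ∀ y i, V y i = (∑ j, a i j * d j) + ∑ j, b i j * (2 * y j - 1))
    (W : Set ℝ)
    (hW : W = {r : ℝ | ∃ y : Fin t → ℝ, (∀ j, y j = 0 ∨ y j = 1) ∧
      r = Finset.univ.sup' (Finset.univ_nonempty_iff.mpr ⟨⟨0, hN⟩⟩) (V y)}) :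
    sInf W ≤ 3 ∧
    (sInf W = 3 ↔
      ∀ y : Fin t → ℝ, (∀ j, y j = 0 ∨ y j = 1) → ∃ i, V y i = 3) := by
  have hne : (Finset.univ : Finset (Fin N)).Nonempty :=
    Finset.univ_nonempty_iff.mpr ⟨⟨0, hN⟩⟩
  have hsign : ∀ (y : Fin t → ℝ), (∀ j, y j = 0 ∨ y j = 1) →
      ∀ j, 2 * y j - 1 = 1 ∨ 2 * y j - 1 = -1 := by
    intro y hy j; rcases hy j with h | h <;> rw [h] <;> norm_num
  have ea : ∀ i, (∑ j, (if a i j ≠ 0 then (1:ℝ) else 0)) =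
      (Finset.univ.filter fun j => a i j ≠ 0).card := by
    intro i; rw [Finset.sum_boole]
  have eb : ∀ i, (∑ j, (if b i j ≠ 0 then (1:ℝ) else 0)) =
      (Finset.univ.filter fun j => b i j ≠ 0).card := by
    intro i; rw [Finset.sum_boole]
  have ecard : ∀ i, ((Finset.univ.filter fun j => a i j ≠ 0).card : ℝ) +
      ((Finset.univ.filter fun j => b i j ≠ 0).card : ℝ) = 3 := by
    intro i
    exact_mod_cast h3 i
  have hVle : ∀ (y : Fin t → ℝ), (∀ j, y j = 0 ∨ y j = 1) → ∀ i, V y i ≤ 3 := by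
    intro y hy i
    rw [hV]
    have h1 : (∑ j, a i j * d j) ≤ ∑ j, (if a i j ≠ 0 then (1:ℝ) else 0) :=
      Finset.sum_le_sum fun j _ => stmt18_aux_le _ _ (ha i j) (hd j)
    have h2 : (∑ j, b i j * (2 * y j - 1)) ≤ ∑ j, (if b i j ≠ 0 then (1:ℝ) else 0) :=
      Finset.sum_le_sum fun j _ => stmt18_aux_le _ _ (hb i j) (hsign y hy j)
    calc (∑ j, a i j * d j) + ∑ j, b i j * (2 * y j - 1)
        ≤ (∑ j, (if a i j ≠ 0 then (1:ℝ) else 0)) +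
          ∑ j, (if b i j ≠ 0 then (1:ℝ) else 0) := add_le_add h1 h2
      _ = 3 := by rw [ea, eb, ecard]
  have hVge : ∀ (y : Fin t → ℝ), (∀ j, y j = 0 ∨ y j = 1) → ∀ i, -3 ≤ V y i := by
    intro y hy i
    rw [hV]
    have h1 : (∑ j, -(if a i j ≠ 0 then (1:ℝ) else 0)) ≤ ∑ j, a i j * d j :=
      Finset.sum_le_sum fun j _ => stmt18_aux_ge _ _ (ha i j) (hd j)
    have h2 : (∑ j, -(if b i j ≠ 0 then (1:ℝ) else 0)) ≤ ∑ j, b i j * (2 * y j - 1) :=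
      Finset.sum_le_sum fun j _ => stmt18_aux_ge _ _ (hb i j) (hsign y hy j)
    have : -3 = (∑ j, -(if a i j ≠ 0 then (1:ℝ) else 0)) +
        ∑ j, -(if b i j ≠ 0 then (1:ℝ) else 0) := by
      rw [Finset.sum_neg_distrib, Finset.sum_neg_distrib, ea, eb]
      have := ecard i
      linarith
    rw [this]
    exact add_le_add h1 h2
  -- elements of W are in [-3, 3]
  have hub : ∀ r ∈ W, r ≤ 3 := by
    intro r hr
    rw [hW] at hr
    obtain ⟨y, hy, rfl⟩ := hr
    exact Finset.sup'_le _ _ fun i _ => hVle y hy i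
  have hlb : ∀ r ∈ W, (-3:ℝ) ≤ r := by
    intro r hr
    rw [hW] at hr
    obtain ⟨y, hy, rfl⟩ := hr
    exact le_trans (hVge y hy ⟨0, hN⟩) (Finset.le_sup' _ (Finset.mem_univ _))
  have hbdd : BddBelow W := ⟨-3, hlb⟩
  have hWne : W.Nonempty := by
    rw [hW]
    exact ⟨_, fun _ => 0, fun j => Or.inl rfl, rfl⟩
  have hmem : ∀ (y : Fin t → ℝ), (∀ j, y j = 0 ∨ y j = 1) →
      Finset.univ.sup' hne (V y) ∈ W := by
    intro y hy; rw [hW]; exact ⟨y, hy, rfl⟩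
  obtain ⟨r0, hr0⟩ := hWne
  have h1 : sInf W ≤ 3 := le_trans (csInf_le hbdd hr0) (hub r0 hr0)
  refine ⟨h1, ?_, ?_⟩
  · intro heq y hy
    have hmem' := hmem y hy
    have h2 : (3:ℝ) ≤ Finset.univ.sup' hne (V y) := heq ▸ csInf_le hbdd hmem'
    obtain ⟨i, _, hi⟩ := Finset.exists_mem_eq_sup' hne (V y)
    exact ⟨i, le_antisymm (hVle y hy i) (by rw [← hi]; exact h2)⟩
  · intro hall
    refine le_antisymm h1 (le_csInf ⟨r0, hr0⟩ ?_)
    intro r hr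
    obtain ⟨y, hy, rfl⟩ := hW ▸ hr
    obtain ⟨i, hi⟩ := hall y hy
    calc (3:ℝ) = V y i := hi.symm
      _ ≤ _ := Finset.le_sup' _ (Finset.mem_univ _)
end
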